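/- For a positive definite m×m matrix M and a positive semidefinite m×m matrix N, the directional derivative of the Kiefer criterion Φ_p at M in the direction N, defined as lim_{β→0+} (Φ_p[(1-β)M + βN] - Φ_p[M])/β, equals Φ_p[M] · (tr[M^{-p-1}N]/tr[M^{-p}] - 1), for p > 0. -/

import Mathlib

open Matrix Polynomial
open scoped Classical Topology


/-- Real power of a symmetric matrix via spectral decomposition; 0 if not Hermitian. -/
noncomputable def mpow {m : ℕ} (M : Matrix (Fin m) (Fin m) ℝ) (p : ℝ) :
    Matrix (Fin m) (Fin m) ℝ :=
  if h : M.IsHermitian then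
    (h.eigenvectorUnitary : Matrix (Fin m) (Fin m) ℝ) *
      Matrix.diagonal (fun i => (h.eigenvalues i) ^ p) *
      (star (h.eigenvectorUnitary : Matrix (Fin m) (Fin m) ℝ))
  else 0

/-- Kiefer's `Φ_p` criterion for `p > 0`, extended by `0` to singular matrices. -/
noncomputable def Phip {m : ℕ} (p : ℝ) (M : Matrix (Fin m) (Fin m) ℝ) : ℝ :=
  if M.PosDef then ((1 / (m : ℝ)) * (mpow M (-p)).trace) ^ (-1 / p : ℝ) else 0

namespace KA

variable {m : ℕ}

/-- unitary from spectral decomposition -/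
noncomputable def uU {B : Matrix (Fin m) (Fin m) ℝ} (hB : B.IsHermitian) :
    Matrix (Fin m) (Fin m) ℝ := hB.eigenvectorUnitary

lemma uU_star_mul {B : Matrix (Fin m) (Fin m) ℝ} (hB : B.IsHermitian) :
    star (uU hB) * uU hB = 1 := by
  simpa [uU] using (Matrix.mem_unitaryGroup_iff').mp hB.eigenvectorUnitary.2

lemma uU_mul_star {B : Matrix (Fin m) (Fin m) ℝ} (hB : B.IsHermitian) :
    uU hB * star (uU hB) = 1 := by
  simpa [uU] using (Matrix.mem_unitaryGroup_iff).mp hB.eigenvectorUnitary.2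

/-- functional calculus -/
noncomputable def fapp {B : Matrix (Fin m) (Fin m) ℝ} (hB : B.IsHermitian) (φ : ℝ → ℝ) :
    Matrix (Fin m) (Fin m) ℝ :=
  uU hB * Matrix.diagonal (fun i => φ (hB.eigenvalues i)) * star (uU hB)

lemma spectral_real {B : Matrix (Fin m) (Fin m) ℝ} (hB : B.IsHermitian) :
    B = fapp hB id := by
  have h := hB.spectral_theorem
  simpa [fapp, uU, Function.comp] using h

lemma fapp_mul_fapp {B : Matrix (Fin m) (Fin m) ℝ} (hB : B.IsHermitian) (φ ψ : ℝ → ℝ) :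
    fapp hB φ * fapp hB ψ = fapp hB (fun x => φ x * ψ x) := by
  simp only [fapp]
  simp only [Matrix.mul_assoc]
  rw [← Matrix.mul_assoc (star (uU hB)) (uU hB), uU_star_mul hB, Matrix.one_mul,
    ← Matrix.mul_assoc ((Matrix.diagonal fun i => φ (hB.eigenvalues i))),
    Matrix.diagonal_mul_diagonal]

lemma fapp_one {B : Matrix (Fin m) (Fin m) ℝ} (hB : B.IsHermitian) :
    fapp hB (fun _ => 1) = 1 := by
  simp [fapp, Matrix.diagonal_one, uU_mul_star]

lemma fapp_add {B : Matrix (Fin m) (Fin m) ℝ} (hB : B.IsHermitian) (φ ψ : ℝ → ℝ) :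
    fapp hB (fun x => φ x + ψ x) = fapp hB φ + fapp hB ψ := by
  have : (Matrix.diagonal fun i => φ (hB.eigenvalues i) + ψ (hB.eigenvalues i)) =
      Matrix.diagonal (fun i => φ (hB.eigenvalues i)) + Matrix.diagonal (fun i => ψ (hB.eigenvalues i)) := by
    rw [Matrix.diagonal_add]
  rw [fapp, fapp, fapp, this, Matrix.mul_add, Matrix.add_mul]

lemma fapp_smul {B : Matrix (Fin m) (Fin m) ℝ} (hB : B.IsHermitian) (c : ℝ) (φ : ℝ → ℝ) :
    fapp hB (fun x => c * φ x) = c • fapp hB φ := by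
  have : (Matrix.diagonal fun i => c * φ (hB.eigenvalues i)) =
      c • Matrix.diagonal (fun i => φ (hB.eigenvalues i)) := by
    rw [← Matrix.diagonal_smul]; rfl
  simp [fapp, this, Matrix.smul_mul, Matrix.mul_smul]

end KA

namespace KA
variable {m : ℕ}

lemma trace_diagonal_mul' (d : Fin m → ℝ) (X : Matrix (Fin m) (Fin m) ℝ) :
    (Matrix.diagonal d * X).trace = ∑ i, d i * X i i := by
  simp [Matrix.trace, Matrix.diag, Matrix.diagonal_mul]

lemma trace_fapp_mul {B : Matrix (Fin m) (Fin m) ℝ} (hB : B.IsHermitian) (φ : ℝ → ℝ)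
    (C : Matrix (Fin m) (Fin m) ℝ) :
    (fapp hB φ * C).trace = ∑ i, φ (hB.eigenvalues i) * (star (uU hB) * C * uU hB) i i := by
  have : fapp hB φ * C = uU hB * (Matrix.diagonal (fun i => φ (hB.eigenvalues i)) *
      (star (uU hB) * C)) := by
    simp [fapp, Matrix.mul_assoc]
  rw [this, Matrix.trace_mul_comm, Matrix.mul_assoc, trace_diagonal_mul']

lemma trace_fapp {B : Matrix (Fin m) (Fin m) ℝ} (hB : B.IsHermitian) (φ : ℝ → ℝ) :
    (fapp hB φ).trace = ∑ i, φ (hB.eigenvalues i) := by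
  have h := trace_fapp_mul hB φ 1
  simpa [uU_star_mul hB] using h

lemma star_apply' (U : Matrix (Fin m) (Fin m) ℝ) (i j : Fin m) : (star U) i j = U j i := by
  simp [Matrix.star_eq_conjTranspose, Matrix.conjTranspose_apply]

/-- the diagonal entries of `Uᵀ C U` are quadratic forms in the columns of U -/
lemma diag_conj_eq_quadform (C U : Matrix (Fin m) (Fin m) ℝ) (i : Fin m) :
    (star U * C * U) i i = (fun j => U j i) ⬝ᵥ C *ᵥ (fun j => U j i) := by
  simp only [Matrix.mul_apply, Matrix.mulVec, dotProduct, star_apply',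
    Finset.sum_mul, Finset.mul_sum]
  rw [Finset.sum_comm]
  refine Finset.sum_congr rfl fun k _ => Finset.sum_congr rfl fun j _ => by ring

lemma col_unit {B : Matrix (Fin m) (Fin m) ℝ} (hB : B.IsHermitian) (i : Fin m) :
    ∑ j, (uU hB j i) * (uU hB j i) = 1 := by
  have h := congrArg (fun X => X i i) (uU_star_mul hB)
  simpa [Matrix.mul_apply, star_apply'] using h

lemma eigenvalues_eq_quadform {B : Matrix (Fin m) (Fin m) ℝ} (hB : B.IsHermitian) (i : Fin m) :
    hB.eigenvalues i = (fun j => uU hB j i) ⬝ᵥ B *ᵥ (fun j => uU hB j i) := by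
  rw [← diag_conj_eq_quadform]
  have h := congrArg (fun X : Matrix (Fin m) (Fin m) ℝ => X i i)
    (show star (uU hB) * B * uU hB = Matrix.diagonal hB.eigenvalues by
      conv_lhs => arg 1; arg 2; rw [spectral_real hB]
      simp only [fapp, Matrix.mul_assoc, uU_star_mul hB, Matrix.mul_one]
      rw [← Matrix.mul_assoc, uU_star_mul hB, Matrix.one_mul]
      rfl)
  simpa [uU, Matrix.diagonal_apply_eq] using h.symm

/-- quadratic form written in eigencoordinates -/
lemma quadform_eq_sum {B : Matrix (Fin m) (Fin m) ℝ} (hB : B.IsHermitian) (v : Fin m → ℝ) :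
    v ⬝ᵥ B *ᵥ v = ∑ i, hB.eigenvalues i * ((star (uU hB) *ᵥ v) i)^2 := by
  set w := star (uU hB) *ᵥ v with hw
  have hB' := spectral_real hB
  conv_lhs => rw [hB']
  rw [fapp, ← Matrix.mulVec_mulVec, ← Matrix.mulVec_mulVec, ← hw,
    Matrix.dotProduct_mulVec, ← Matrix.mulVec_transpose,
    ← Matrix.conjTranspose_eq_transpose_of_trivial, ← Matrix.star_eq_conjTranspose, ← hw]
  simp [dotProduct, Matrix.mulVec_diagonal]
  refine Finset.sum_congr rfl fun i _ => by ring

lemma dot_self_eq_sum {B : Matrix (Fin m) (Fin m) ℝ} (hB : B.IsHermitian) (v : Fin m → ℝ) :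
    v ⬝ᵥ v = ∑ i, ((star (uU hB) *ᵥ v) i)^2 := by
  set w := star (uU hB) *ᵥ v with hw
  have : ∑ i, (w i)^2 = w ⬝ᵥ w := by
    simp [dotProduct, sq]
  rw [this, hw, Matrix.dotProduct_mulVec, ← Matrix.mulVec_transpose,
    ← Matrix.conjTranspose_eq_transpose_of_trivial, ← Matrix.star_eq_conjTranspose,
    star_star, Matrix.mulVec_mulVec, uU_mul_star hB, Matrix.one_mulVec]

end KA

namespace KA
variable {m : ℕ}

lemma quadform_le {B : Matrix (Fin m) (Fin m) ℝ} (hB : B.IsHermitian) {c : ℝ}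
    (hc : ∀ i, hB.eigenvalues i ≤ c) (v : Fin m → ℝ) :
    v ⬝ᵥ B *ᵥ v ≤ c * (v ⬝ᵥ v) := by
  rw [quadform_eq_sum hB v, dot_self_eq_sum hB v, Finset.mul_sum]
  exact Finset.sum_le_sum fun i _ => mul_le_mul_of_nonneg_right (hc i) (sq_nonneg _)

lemma le_quadform {B : Matrix (Fin m) (Fin m) ℝ} (hB : B.IsHermitian) {c : ℝ}
    (hc : ∀ i, c ≤ hB.eigenvalues i) (v : Fin m → ℝ) :
    c * (v ⬝ᵥ v) ≤ v ⬝ᵥ B *ᵥ v := by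
  rw [quadform_eq_sum hB v, dot_self_eq_sum hB v, Finset.mul_sum]
  exact Finset.sum_le_sum fun i _ => mul_le_mul_of_nonneg_right (hc i) (sq_nonneg _)

lemma abs_quadform_le {B : Matrix (Fin m) (Fin m) ℝ} (hB : B.IsHermitian) {c : ℝ}
    (hc : ∀ i, |hB.eigenvalues i| ≤ c) (v : Fin m → ℝ) :
    |v ⬝ᵥ B *ᵥ v| ≤ c * (v ⬝ᵥ v) := by
  have h1 : v ⬝ᵥ B *ᵥ v ≤ c * (v ⬝ᵥ v) := quadform_le hB (fun i => (abs_le.mp (hc i)).2) v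
  have h2 : (-c) * (v ⬝ᵥ v) ≤ v ⬝ᵥ B *ᵥ v := le_quadform hB (fun i => (abs_le.mp (hc i)).1) v
  rw [abs_le]
  constructor
  · nlinarith
  · exact h1

lemma le_eig_of_quadform {B : Matrix (Fin m) (Fin m) ℝ} (hB : B.IsHermitian) {c : ℝ}
    (h : ∀ v, c * (v ⬝ᵥ v) ≤ v ⬝ᵥ B *ᵥ v) (i : Fin m) : c ≤ hB.eigenvalues i := by
  have h1 := eigenvalues_eq_quadform hB i
  have h2 : (fun j => uU hB j i) ⬝ᵥ (fun j => uU hB j i) = 1 := by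
    simpa [dotProduct] using col_unit hB i
  have := h (fun j => uU hB j i)
  rw [h2, mul_one] at this
  linarith [h1 ▸ this]

lemma eig_le_of_quadform {B : Matrix (Fin m) (Fin m) ℝ} (hB : B.IsHermitian) {c : ℝ}
    (h : ∀ v, v ⬝ᵥ B *ᵥ v ≤ c * (v ⬝ᵥ v)) (i : Fin m) : hB.eigenvalues i ≤ c := by
  have h1 := eigenvalues_eq_quadform hB i
  have h2 : (fun j => uU hB j i) ⬝ᵥ (fun j => uU hB j i) = 1 := by
    simpa [dotProduct] using col_unit hB i
  have := h (fun j => uU hB j i)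
  rw [h2, mul_one] at this
  linarith [h1 ▸ this]

lemma fapp_congr {B : Matrix (Fin m) (Fin m) ℝ} (hB : B.IsHermitian) {φ ψ : ℝ → ℝ}
    (h : ∀ i, φ (hB.eigenvalues i) = ψ (hB.eigenvalues i)) : fapp hB φ = fapp hB ψ := by
  unfold fapp
  congr 1
  congr 1
  exact congrArg Matrix.diagonal (funext h)

lemma fapp_mul_base {B : Matrix (Fin m) (Fin m) ℝ} (hB : B.IsHermitian) (φ : ℝ → ℝ) :
    fapp hB φ * B = fapp hB (fun x => φ x * x) := by
  nth_rewrite 2 [spectral_real hB]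
  rw [fapp_mul_fapp]
  exact fapp_congr hB fun i => by simp

lemma mpow_eq_fapp {B : Matrix (Fin m) (Fin m) ℝ} (hB : B.IsHermitian) (r : ℝ) :
    mpow B r = fapp hB (fun x => x ^ r) := by
  rw [mpow, dif_pos hB]; rfl

lemma trace_fapp_sub_mul_bound {B : Matrix (Fin m) (Fin m) ℝ} (hB : B.IsHermitian)
    (φ ψ : ℝ → ℝ) {C : Matrix (Fin m) (Fin m) ℝ} {c ε : ℝ}
    (hC : ∀ v, |v ⬝ᵥ C *ᵥ v| ≤ c * (v ⬝ᵥ v))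
    (hφψ : ∀ i, |φ (hB.eigenvalues i) - ψ (hB.eigenvalues i)| ≤ ε) (hε : 0 ≤ ε) :
    |(fapp hB φ * C).trace - (fapp hB ψ * C).trace| ≤ m * (ε * c) := by
  rw [trace_fapp_mul, trace_fapp_mul, ← Finset.sum_sub_distrib]
  refine le_trans (Finset.abs_sum_le_sum_abs _ _) ?_
  have : ∀ i : Fin m, |φ (hB.eigenvalues i) * (star (uU hB) * C * uU hB) i i -
      ψ (hB.eigenvalues i) * (star (uU hB) * C * uU hB) i i| ≤ ε * c := by
    intro i
    rw [← sub_mul, abs_mul]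
    have hd : |(star (uU hB) * C * uU hB) i i| ≤ c := by
      rw [diag_conj_eq_quadform]
      have h2 : (fun j => uU hB j i) ⬝ᵥ (fun j => uU hB j i) = 1 := by
        simpa [dotProduct] using col_unit hB i
      have := hC (fun j => uU hB j i)
      rwa [h2, mul_one] at this
    exact mul_le_mul (hφψ i) hd (abs_nonneg _) hε
  refine le_trans (Finset.sum_le_sum fun i _ => this i) ?_
  simp [Finset.card_univ]

end KA

namespace KA
variable {m : ℕ}

lemma pow_eq_fapp {B : Matrix (Fin m) (Fin m) ℝ} (hB : B.IsHermitian) (k : ℕ) :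
    B ^ k = fapp hB (fun x => x ^ k) := by
  induction k with
  | zero => simpa using (fapp_one hB).symm
  | succ n ih =>
    rw [pow_succ, ih]
    nth_rewrite 2 [spectral_real hB]
    rw [fapp_mul_fapp]
    exact fapp_congr hB fun i => by simp [pow_succ]

lemma aeval_eq_fapp {B : Matrix (Fin m) (Fin m) ℝ} (hB : B.IsHermitian) (q : Polynomial ℝ) :
    Polynomial.aeval B q = fapp hB (fun x => q.eval x) := by
  induction q using Polynomial.induction_on' with
  | add f g hf hg =>
    rw [map_add, hf, hg, ← fapp_add]
    exact fapp_congr hB fun i => by simp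
  | monomial k a =>
    rw [Polynomial.aeval_monomial]
    have h1 : (fun x : ℝ => (Polynomial.monomial k a).eval x) = fun x => a * x ^ k := by
      funext x; simp [Polynomial.eval_monomial]
    rw [h1, fapp_smul, ← pow_eq_fapp hB]
    simp [Algebra.algebraMap_eq_smul_one, smul_mul_assoc]

end KA

attribute [local instance] Matrix.frobeniusSeminormedAddCommGroup
  Matrix.frobeniusNormedAddCommGroup Matrix.frobeniusNormedSpace
  Matrix.frobeniusNormedRing Matrix.frobeniusNormedAlgebra

namespace KA
variable {m : ℕ}

noncomputable def traceCLM : Matrix (Fin m) (Fin m) ℝ →L[ℝ] ℝ :=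
  LinearMap.toContinuousLinearMap (Matrix.traceLinearMap (Fin m) ℝ ℝ)

lemma traceCLM_apply (X : Matrix (Fin m) (Fin m) ℝ) : traceCLM X = X.trace := rfl

lemma hasDerivAt_matpow {A : ℝ → Matrix (Fin m) (Fin m) ℝ} {A' : Matrix (Fin m) (Fin m) ℝ}
    {b : ℝ} (hA : HasDerivAt A A' b) (k : ℕ) :
    HasDerivAt (fun β => (A β) ^ k)
      (∑ j ∈ Finset.range k, (A b) ^ j * A' * (A b) ^ (k - 1 - j)) b := by
  induction k with
  | zero =>
    simp only [pow_zero, Finset.range_zero, Finset.sum_empty]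
    exact hasDerivAt_const b (1 : Matrix (Fin m) (Fin m) ℝ)
  | succ n ih =>
    have h := ih.mul hA
    have heq : (fun β => (A β) ^ n * A β) = fun β => (A β) ^ (n + 1) := by
      funext β; rw [← pow_succ]
    rw [show ((fun β => A β ^ n) * A) = fun β => (A β)^(n+1) from heq] at h
    refine h.congr_deriv (Eq.symm ?_)
    rw [Finset.sum_range_succ]
    congr 1
    · rw [Finset.sum_mul]
      refine Finset.sum_congr rfl fun j hj => ?_
      rw [Finset.mem_range] at hj
      have : n - j = (n - 1 - j) + 1 := by omega
      rw [Nat.add_sub_cancel, this, pow_succ, ← Matrix.mul_assoc]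
    · simp [Nat.sub_self]

lemma hasDerivAt_trace_pow {A : ℝ → Matrix (Fin m) (Fin m) ℝ} {A' : Matrix (Fin m) (Fin m) ℝ}
    {b : ℝ} (hA : HasDerivAt A A' b) (k : ℕ) :
    HasDerivAt (fun β => ((A β) ^ k).trace) ((k : ℝ) * ((A b) ^ (k - 1) * A').trace) b := by
  have h := (traceCLM.hasFDerivAt (x := (A b) ^ k)).comp_hasDerivAt b (hasDerivAt_matpow hA k)
  have heq : traceCLM (∑ j ∈ Finset.range k, (A b) ^ j * A' * (A b) ^ (k - 1 - j)) =
      (k : ℝ) * ((A b) ^ (k - 1) * A').trace := by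
    rw [traceCLM_apply, Matrix.trace_sum]
    have : ∀ j ∈ Finset.range k, ((A b) ^ j * A' * (A b) ^ (k - 1 - j)).trace =
        ((A b) ^ (k - 1) * A').trace := by
      intro j hj
      rw [Finset.mem_range] at hj
      rw [Matrix.trace_mul_cycle, ← pow_add]
      congr 3
      omega
    rw [Finset.sum_congr rfl this, Finset.sum_const, Finset.card_range, nsmul_eq_mul]
  replace h := h.congr_deriv heq
  exact h

lemma hasDerivAt_trace_aeval {A : ℝ → Matrix (Fin m) (Fin m) ℝ} {A' : Matrix (Fin m) (Fin m) ℝ}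
    {b : ℝ} (hA : HasDerivAt A A' b) (q : Polynomial ℝ) :
    HasDerivAt (fun β => (Polynomial.aeval (A β) q).trace)
      ((Polynomial.aeval (A b) q.derivative * A').trace) b := by
  induction q using Polynomial.induction_on' with
  | add f g hf hg =>
    have h := hf.add hg
    simp only [map_add, Matrix.add_mul, Matrix.trace_add]
    exact h
  | monomial k a =>
    have h := (hasDerivAt_trace_pow hA k).const_mul a
    have heq1 : (fun β => a * ((A β) ^ k).trace) =
        fun β => (Polynomial.aeval (A β) (Polynomial.monomial k a)).trace := by
      funext β
      rw [Polynomial.aeval_monomial, Algebra.algebraMap_eq_smul_one, smul_mul_assoc,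
        Matrix.one_mul, Matrix.trace_smul, smul_eq_mul]
    rw [heq1] at h
    refine h.congr_deriv (Eq.symm ?_)
    rw [Polynomial.derivative_monomial, Polynomial.aeval_monomial,
      Algebra.algebraMap_eq_smul_one, smul_mul_assoc, Matrix.one_mul, Matrix.smul_mul,
      Matrix.trace_smul]
    rw [smul_eq_mul]
    ring

end KA

namespace KA

/-- polynomial antiderivative -/
noncomputable def antider (q : Polynomial ℝ) : Polynomial ℝ :=
  q.sum fun k c => Polynomial.C (c / (k + 1)) * Polynomial.X ^ (k + 1)

lemma derivative_antider (q : Polynomial ℝ) : (antider q).derivative = q := by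
  rw [antider, Polynomial.sum, map_sum]
  conv_rhs => rw [← Polynomial.sum_C_mul_X_pow_eq q, Polynomial.sum]
  refine Finset.sum_congr rfl fun k _ => ?_
  rw [Polynomial.derivative_C_mul_X_pow]
  have hk : ((k : ℝ) + 1) ≠ 0 := by positivity
  rw [Nat.add_sub_cancel]
  congr 1
  rw [Nat.cast_add, Nat.cast_one, div_mul_cancel₀ _ hk]

end KA

namespace KA

lemma poly_near_rpow {a b p ε : ℝ} (ha : 0 < a) (hε : 0 ≤ ε) (P : Polynomial ℝ)
    (hder : ∀ x ∈ Set.Icc a b, |P.derivative.eval x - (-p * x ^ (-p - 1 : ℝ))| ≤ ε)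
    (hPa : P.eval a = a ^ (-p : ℝ)) :
    ∀ x ∈ Set.Icc a b, |P.eval x - x ^ (-p : ℝ)| ≤ ε * (b - a) := by
  intro x hx
  set f : ℝ → ℝ := fun x => P.eval x - x ^ (-p : ℝ) with hf
  set f' : ℝ → ℝ := fun x => P.derivative.eval x - -p * x ^ (-p - 1 : ℝ) with hf'
  have hderiv : ∀ y ∈ Set.Icc a b, HasDerivWithinAt f (f' y) (Set.Icc a b) y := by
    intro y hy
    have hy0 : y ≠ 0 := by
      have := hy.1; intro h; rw [h] at this; linarith
    have h1 : HasDerivAt (fun x : ℝ => x ^ (-p : ℝ)) (-p * y ^ (-p - 1 : ℝ)) y :=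
      Real.hasDerivAt_rpow_const (Or.inl hy0)
    exact ((P.hasDerivAt y).sub h1).hasDerivWithinAt
  have hbound : ∀ y ∈ Set.Icc a b, ‖f' y‖ ≤ ε := by
    intro y hy
    simpa [hf', Real.norm_eq_abs] using hder y hy
  have := (convex_Icc a b).norm_image_sub_le_of_norm_hasDerivWithin_le hderiv hbound
    (Set.left_mem_Icc.mpr (hx.1.trans hx.2)) hx
  have hfa : f a = 0 := by simp [hf, hPa]
  rw [hfa, sub_zero, Real.norm_eq_abs, Real.norm_eq_abs] at this
  calc |P.eval x - x ^ (-p:ℝ)| = |f x| := rfl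
    _ ≤ ε * |x - a| := this
    _ ≤ ε * (b - a) := by
        refine mul_le_mul_of_nonneg_left ?_ hε
        rw [abs_le]; constructor <;> [linarith [hx.1, hx.2]; linarith [hx.1, hx.2]]

end KA

namespace KA
lemma bound_lower {aM bN δ β d vM vN : ℝ} (hd : 0 ≤ d) (h1 : aM*d ≤ vM) (h3 : 0 ≤ vN)
    (h4 : vN ≤ bN*d) (hβl : -δ < β) (hβu : β < 1/2) (hδ_pos : 0 < δ) (hδbN : δ*bN ≤ aM/2)
    (haM : 0 < aM) (hbN : 0 ≤ bN) : aM/2*d ≤ (1-β)*vM + β*vN := by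
  have hvM0 : 0 ≤ vM := le_trans (mul_nonneg haM.le hd) h1
  rcases le_or_gt 0 β with hβ0 | hβ0
  · nlinarith [mul_nonneg (show (0:ℝ) ≤ 1/2 - β by linarith) hvM0, mul_nonneg hβ0 h3]
  · have hnegβ : (0:ℝ) ≤ -β := by linarith
    nlinarith [mul_nonneg hnegβ hvM0, mul_nonneg hnegβ (sub_nonneg.mpr h4),
      mul_nonneg (mul_nonneg (show (0:ℝ) ≤ β + δ by linarith) hbN) hd,
      mul_nonneg (show (0:ℝ) ≤ aM/2 - δ*bN by linarith) hd]

lemma bound_upper {bM bN δ β d vM vN : ℝ} (hd : 0 ≤ d) (hvM0 : 0 ≤ vM) (h2 : vM ≤ bM*d)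
    (h3 : 0 ≤ vN) (h4 : vN ≤ bN*d) (hβl : -δ < β) (hβu : β < 1/2) (hδ_half : δ ≤ 1/2)
    (hbM : 0 < bM) (hbN : 0 ≤ bN) : (1-β)*vM + β*vN ≤ (2*bM+bN+1)*d := by
  rcases le_or_gt 0 β with hβ0 | hβ0
  · nlinarith [mul_nonneg hβ0 hvM0, mul_nonneg (show (0:ℝ) ≤ 1 - β by linarith) h3,
      mul_nonneg (show (0:ℝ) ≤ bM + 1 by linarith) hd]
  · have hnegβ : (0:ℝ) ≤ -β := by linarith
    nlinarith [mul_nonneg hnegβ h3, mul_nonneg (show (0:ℝ) ≤ δ + β by linarith) hvM0,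
      mul_nonneg (show (0:ℝ) ≤ 1/2 - δ by linarith) hvM0,
      mul_nonneg (show (0:ℝ) ≤ bM/2 + bN + 1 by linarith) hd]
end KA

open KA Filter in
theorem test {m : ℕ} (p : ℝ) (hp : 0 < p) (M N : Matrix (Fin m) (Fin m) ℝ)
    (hM : M.PosDef) (hN : N.PosSemidef) :
    Filter.Tendsto
      (fun β : ℝ => (Phip p ((1 - β) • M + β • N) - Phip p M) / β)
      (nhdsWithin 0 (Set.Ioi 0))
      (nhds (Phip p M * ((mpow M (-p - 1) * N).trace / (mpow M (-p)).trace - 1))) := by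
  have hpne : (-1 : ℝ) / p ≠ 0 := by
    apply div_ne_zero <;> [norm_num; exact ne_of_gt hp]
  rcases Nat.eq_zero_or_pos m with hm | hm
  · -- trivial case m = 0
    subst hm
    have h0 : ∀ X : Matrix (Fin 0) (Fin 0) ℝ, Phip p X = 0 := by
      intro X
      unfold Phip
      have ht : (mpow X (-p)).trace = 0 := by
        simp [Matrix.trace]
      rw [ht, mul_zero, Real.zero_rpow hpne]
      simp
    simp only [h0, sub_zero, zero_div, mul_comm]
    rw [zero_mul]
    exact tendsto_const_nhds
  · -- main case : m ≥ 1
    haveI : Nonempty (Fin m) := ⟨⟨0, hm⟩⟩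
    set Cm : Matrix (Fin m) (Fin m) ℝ := N - M with hCm
    set A : ℝ → Matrix (Fin m) (Fin m) ℝ := fun β => (1 - β) • M + β • N with hA
    have hA0 : A 0 = M := by simp [hA]
    have hherm : ∀ β : ℝ, (A β).IsHermitian := by
      intro β
      have h1 : Mᴴ = M := hM.1
      have h2 : Nᴴ = N := hN.1
      show ((1 - β) • M + β • N)ᴴ = (1 - β) • M + β • N
      rw [Matrix.conjTranspose_add, Matrix.conjTranspose_smul, Matrix.conjTranspose_smul,
        h1, h2, star_trivial, star_trivial]
    -- eigenvalue bounds of M and N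
    set eM := hM.1.eigenvalues with heM
    set eN := hN.1.eigenvalues with heN
    set aM : ℝ := Finset.univ.inf' Finset.univ_nonempty eM with haM
    set bM : ℝ := Finset.univ.sup' Finset.univ_nonempty eM with hbM
    set bN : ℝ := Finset.univ.sup' Finset.univ_nonempty eN with hbN
    have haM_pos : 0 < aM := by
      obtain ⟨i, -, hi⟩ := Finset.exists_mem_eq_inf' Finset.univ_nonempty eM
      rw [haM, hi]
      exact hM.eigenvalues_pos i
    have haM_le : ∀ i, aM ≤ eM i := fun i => Finset.inf'_le _ (Finset.mem_univ i)
    have hbM_ge : ∀ i, eM i ≤ bM := fun i => Finset.le_sup' _ (Finset.mem_univ i)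
    have hbN_ge : ∀ i, eN i ≤ bN := fun i => Finset.le_sup' _ (Finset.mem_univ i)
    have hbM_pos : 0 < bM := lt_of_lt_of_le haM_pos (le_trans (haM_le (Classical.arbitrary _)) (hbM_ge _))
    have hbN_nonneg : 0 ≤ bN := le_trans (hN.eigenvalues_nonneg (Classical.arbitrary _)) (hbN_ge _)
    -- quadratic form bounds
    have hdnn : ∀ v : Fin m → ℝ, 0 ≤ v ⬝ᵥ v :=
      fun v => Finset.sum_nonneg fun i _ => mul_self_nonneg _
    have hMqf_lb : ∀ v, aM * (v ⬝ᵥ v) ≤ v ⬝ᵥ M *ᵥ v := le_quadform hM.1 haM_le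
    have hMqf_ub : ∀ v, v ⬝ᵥ M *ᵥ v ≤ bM * (v ⬝ᵥ v) := quadform_le hM.1 hbM_ge
    have hNqf_lb : ∀ v, 0 ≤ v ⬝ᵥ N *ᵥ v := by
      intro v
      have := le_quadform hN.1 (fun i => hN.eigenvalues_nonneg i) v
      simpa using this
    have hNqf_ub : ∀ v, v ⬝ᵥ N *ᵥ v ≤ bN * (v ⬝ᵥ v) := quadform_le hN.1 hbN_ge
    have hCqf : ∀ v, |v ⬝ᵥ Cm *ᵥ v| ≤ (bM + bN) * (v ⬝ᵥ v) := by
      intro v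
      rw [hCm, Matrix.sub_mulVec, dotProduct_sub, abs_le]
      constructor
      · have := hMqf_ub v; have := hNqf_lb v; nlinarith [hdnn v]
      · have := hNqf_ub v; have h2 : 0 ≤ v ⬝ᵥ M *ᵥ v := by have := hMqf_lb v; nlinarith [hdnn v]
        nlinarith [hdnn v]
    -- the interval
    set δ : ℝ := min (1/2) (aM / (2 * (bN + 1))) with hδ
    have hδ_pos : 0 < δ := by
      apply lt_min (by norm_num)
      positivity
    have hδ_le : δ ≤ aM / (2 * (bN + 1)) := min_le_right _ _
    have hδ_half : δ ≤ 1/2 := min_le_left _ _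
    set s : Set ℝ := Set.Ioo (-δ) (1/2) with hs
    have hs_open : IsOpen s := isOpen_Ioo
    have h0s : (0:ℝ) ∈ s := ⟨by linarith, by norm_num⟩
    set a : ℝ := aM / 2 with ha_def
    set b : ℝ := 2 * bM + bN + 1 with hb_def
    have ha_pos : 0 < a := by positivity
    have hab : a ≤ b := by
      have : aM ≤ bM := le_trans (haM_le (Classical.arbitrary _)) (hbM_ge _)
      simp only [ha_def, hb_def]; linarith
    -- quadratic form bounds for A β
    have hkey : ∀ β ∈ s, ∀ v, a * (v ⬝ᵥ v) ≤ v ⬝ᵥ (A β) *ᵥ v ∧ v ⬝ᵥ (A β) *ᵥ v ≤ b * (v ⬝ᵥ v) := by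
      intro β hβ v
      have hexp : v ⬝ᵥ (A β) *ᵥ v = (1 - β) * (v ⬝ᵥ M *ᵥ v) + β * (v ⬝ᵥ N *ᵥ v) := by
        rw [hA]
        simp [Matrix.add_mulVec, Matrix.smul_mulVec, dotProduct_add,
          dotProduct_smul, smul_eq_mul]
      obtain ⟨hβl, hβu⟩ := hβ
      have hd := hdnn v
      have h1 := hMqf_lb v
      have h2 := hMqf_ub v
      have h3 := hNqf_lb v
      have h4 := hNqf_ub v
      have hδbN : δ * bN ≤ aM / 2 := by
        rw [le_div_iff₀ (by positivity : (0:ℝ) < 2*(bN+1))] at hδ_le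
        nlinarith [hδ_pos]
      rw [hexp]
      obtain ⟨hβl, hβu⟩ := And.intro hβl hβu
      constructor
      · exact bound_lower hd h1 h3 h4 hβl hβu hδ_pos hδbN haM_pos hbN_nonneg
      · have hvM0 : 0 ≤ v ⬝ᵥ M *ᵥ v := le_trans (mul_nonneg haM_pos.le hd) h1
        exact bound_upper hd hvM0 h2 h3 h4 hβl hβu hδ_half hbM_pos hbN_nonneg
    have hposdef : ∀ β ∈ s, (A β).PosDef := by
      intro β hβ
      refine Matrix.posDef_iff_dotProduct_mulVec.mpr ⟨hherm β, fun x hx => ?_⟩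
      have hxx : 0 < x ⬝ᵥ x := by
        obtain ⟨i, hi⟩ := Function.ne_iff.mp hx
        exact Finset.sum_pos' (fun j _ => mul_self_nonneg _)
          ⟨i, Finset.mem_univ i, mul_self_pos.mpr hi⟩
      have hk := (hkey β hβ x).1
      have hlt : 0 < x ⬝ᵥ (A β) *ᵥ x := lt_of_lt_of_le (mul_pos ha_pos hxx) hk
      simpa using hlt
    have heig : ∀ β (hβ : β ∈ s) i, (hherm β).eigenvalues i ∈ Set.Icc a b := by
      intro β hβ i
      exact ⟨le_eig_of_quadform (hherm β) (fun v => (hkey β hβ v).1) i,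
        eig_le_of_quadform (hherm β) (fun v => (hkey β hβ v).2) i⟩
    -- Weierstrass approximation of the derivative function
    set h : ℝ → ℝ := fun x => -p * x ^ (-p - 1 : ℝ) with hh
    have hcont : ContinuousOn h (Set.Icc a b) := by
      apply ContinuousOn.mul continuousOn_const
      intro x hx
      exact (Real.continuousAt_rpow_const x _ (Or.inl (ne_of_gt (lt_of_lt_of_le ha_pos hx.1)))).continuousWithinAt
    have hq : ∀ n : ℕ, ∃ q : Polynomial ℝ, ∀ x ∈ Set.Icc a b,
        |q.eval x - h x| < 1/(n+1) := by
      intro n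
      exact exists_polynomial_near_of_continuousOn a b h hcont _ (by positivity)
    choose q hq using hq
    set P : ℕ → Polynomial ℝ := fun n => antider (q n) +
      Polynomial.C (a ^ (-p:ℝ) - (antider (q n)).eval a) with hP
    have hPder : ∀ n, (P n).derivative = q n := by
      intro n
      rw [hP]
      simp [derivative_antider]
    have hPa : ∀ n, (P n).eval a = a ^ (-p:ℝ) := by
      intro n
      simp [hP]
    have hPnear : ∀ n, ∀ x ∈ Set.Icc a b,
        |(P n).eval x - x ^ (-p:ℝ)| ≤ (1/(n+1)) * (b - a) := by
      intro n
      refine poly_near_rpow ha_pos (by positivity) (P n) ?_ (hPa n)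
      intro x hx
      rw [hPder n]
      exact le_of_lt (hq n x hx)
    -- the four functions
    set F : ℕ → ℝ → ℝ := fun n β => ((Polynomial.aeval (A β)) (P n)).trace with hF
    set F' : ℕ → ℝ → ℝ := fun n β => ((Polynomial.aeval (A β)) (q n) * Cm).trace with hF'
    set g : ℝ → ℝ := fun β => (mpow (A β) (-p)).trace with hg
    set g' : ℝ → ℝ := fun β => -p * (mpow (A β) (-p-1) * Cm).trace with hg'
    -- derivative of A
    have hAder : ∀ β : ℝ, HasDerivAt A Cm β := by
      intro β
      have h1 : HasDerivAt (fun β : ℝ => (1 - β) • M) ((-1 : ℝ) • M) β := by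
        have := ((hasDerivAt_id β).const_sub 1).smul_const M
        exact this
      have h2 : HasDerivAt (fun β : ℝ => β • N) ((1:ℝ) • N) β := by
        have := (hasDerivAt_id β).smul_const N
        exact this
      have := h1.add h2
      have heq : (-1 : ℝ) • M + (1:ℝ) • N = Cm := by
        rw [hCm]; simp; abel
      rw [heq] at this
      exact this
    have hFder : ∀ n : ℕ, ∀ β ∈ s, HasDerivAt (F n) (F' n β) β := by
      intro n β _
      have := hasDerivAt_trace_aeval (hAder β) (P n)
      rw [hPder n] at this
      exact this
    -- uniform convergence of the derivatives
    have hg'eq : ∀ β (hβ : β ∈ s),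
        g' β = (fapp (hherm β) (fun x => -p * x ^ (-p-1:ℝ)) * Cm).trace := by
      intro β hβ
      simp only [hg']
      rw [mpow_eq_fapp (hherm β), fapp_smul (hherm β) (-p) (fun x => x ^ (-p-1:ℝ)),
        Matrix.smul_mul, Matrix.trace_smul, smul_eq_mul]
    have hF'eq : ∀ n β, F' n β = (fapp (hherm β) (fun x => (q n).eval x) * Cm).trace := by
      intro n β
      simp only [hF']
      rw [aeval_eq_fapp (hherm β)]
    have hbound : ∀ n β (hβ : β ∈ s),
        |F' n β - g' β| ≤ m * ((1/(n+1)) * (bM + bN)) := by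
      intro n β hβ
      rw [hF'eq n β, hg'eq β hβ]
      refine trace_fapp_sub_mul_bound (hherm β) _ _ hCqf ?_ (by positivity)
      intro i
      exact le_of_lt (hq n _ (heig β hβ i))
    have hunif : TendstoUniformlyOn F' g' atTop s := by
      rw [Metric.tendstoUniformlyOn_iff]
      intro ε hε
      have htend : Tendsto (fun n : ℕ => (m : ℝ) * ((1/(n+1)) * (bM + bN))) atTop (𝓝 0) := by
        have h1 : Tendsto (fun n : ℕ => 1/((n:ℝ)+1)) atTop (𝓝 0) :=
          tendsto_one_div_add_atTop_nhds_zero_nat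
        have := (h1.const_mul ((m : ℝ) * (bM + bN)))
        simp only [mul_zero] at this
        convert this using 2 with n
        ring
      filter_upwards [htend.eventually (gt_mem_nhds hε)] with n hn β hβ
      rw [Real.dist_eq, abs_sub_comm]
      exact lt_of_le_of_lt (hbound n β hβ) hn
    -- pointwise convergence of the functions
    have hptwise : ∀ β ∈ s, Tendsto (fun n => F n β) atTop (𝓝 (g β)) := by
      intro β hβ
      rw [tendsto_iff_dist_tendsto_zero]
      have hd : ∀ n, dist (F n β) (g β) ≤ m * ((1/(n+1)) * (b - a)) := by
        intro n
        simp only [Real.dist_eq, hF, hg]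
        rw [aeval_eq_fapp (hherm β), mpow_eq_fapp (hherm β),
          trace_fapp, trace_fapp, ← Finset.sum_sub_distrib]
        refine le_trans (Finset.abs_sum_le_sum_abs _ _) ?_
        have : ∀ i : Fin m, |(P n).eval ((hherm β).eigenvalues i) -
            ((hherm β).eigenvalues i) ^ (-p:ℝ)| ≤ (1/(n+1)) * (b - a) :=
          fun i => hPnear n _ (heig β hβ i)
        refine le_trans (Finset.sum_le_sum fun i _ => this i) ?_
        simp [Finset.card_univ]
      have htend : Tendsto (fun n : ℕ => (m : ℝ) * ((1/(n+1)) * (b - a))) atTop (𝓝 0) := by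
        have h1 : Tendsto (fun n : ℕ => 1/((n:ℝ)+1)) atTop (𝓝 0) :=
          tendsto_one_div_add_atTop_nhds_zero_nat
        have := (h1.const_mul ((m : ℝ) * (b - a)))
        simp only [mul_zero] at this
        convert this using 2 with n
        ring
      exact squeeze_zero (fun n => dist_nonneg) hd htend
    -- the derivative of g at 0
    have hgderiv : HasDerivAt g (g' 0) 0 :=
      hasDerivAt_of_tendstoUniformlyOn hs_open hunif
        (Filter.Eventually.of_forall fun n => hFder n) hptwise h0s
    -- value and positivity of g 0
    have hg0 : g 0 = (mpow M (-p)).trace := by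
      simp only [hg]
      rw [hA0]
    have hg0sum : (mpow M (-p)).trace = ∑ i, (eM i) ^ (-p : ℝ) := by
      rw [mpow_eq_fapp hM.1, trace_fapp]
    have hg0pos : 0 < g 0 := by
      rw [hg0, hg0sum]
      exact Finset.sum_pos (fun i _ => Real.rpow_pos_of_pos (hM.eigenvalues_pos i) _)
        Finset.univ_nonempty
    have hminv_pos : (0:ℝ) < 1 / m := by positivity
    have hx0 : (0:ℝ) < 1 / m * g 0 := by positivity
    -- Phip on s
    have hPhi : ∀ β ∈ s, Phip p (A β) = ((1/(m:ℝ)) * g β) ^ (-1/p : ℝ) := by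
      intro β hβ
      rw [Phip, if_pos (hposdef β hβ)]
    -- outer derivative
    have h1 : HasDerivAt (fun β => (1/(m:ℝ)) * g β) ((1/(m:ℝ)) * g' 0) 0 :=
      hgderiv.const_mul _
    have houter : HasDerivAt (fun β => ((1/(m:ℝ)) * g β) ^ (-1/p : ℝ))
        (((1/(m:ℝ)) * g' 0) * (-1/p) * ((1/(m:ℝ)) * g 0) ^ ((-1/p : ℝ) - 1)) 0 :=
      h1.rpow_const (Or.inl (ne_of_gt hx0))
    set D : ℝ := ((1/(m:ℝ)) * g' 0) * (-1/p) * ((1/(m:ℝ)) * g 0) ^ ((-1/p : ℝ) - 1) with hD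
    have hFeq : (fun β => Phip p (A β)) =ᶠ[𝓝 (0:ℝ)] fun β => ((1/(m:ℝ)) * g β) ^ (-1/p:ℝ) := by
      filter_upwards [hs_open.mem_nhds h0s] with β hβ
      exact hPhi β hβ
    have hPhider : HasDerivAt (fun β => Phip p (A β)) D 0 :=
      houter.congr_of_eventuallyEq hFeq
    -- conclude the limit along Ioi 0
    rw [hasDerivAt_iff_tendsto_slope] at hPhider
    have hmono : 𝓝[Set.Ioi (0:ℝ)] 0 ≤ 𝓝[≠] (0:ℝ) :=
      nhdsWithin_mono 0 (fun x hx => ne_of_gt hx)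
    have hslope : ∀ β : ℝ, slope (fun β => Phip p (A β)) 0 β =
        (Phip p ((1 - β) • M + β • N) - Phip p M) / β := by
      intro β
      rw [slope_def_field, hA0, sub_zero]
    have hfinal : Tendsto (fun β : ℝ => (Phip p ((1 - β) • M + β • N) - Phip p M) / β)
        (𝓝[Set.Ioi (0:ℝ)] 0) (𝓝 D) := by
      refine Tendsto.congr (fun β => hslope β) (hPhider.mono_left hmono)
    -- identify D with the stated limit
    have hDeq : D = Phip p M * ((mpow M (-p - 1) * N).trace / (mpow M (-p)).trace - 1) := by
      -- key identity : mpow M (-p-1) * M = mpow M (-p)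
      have hkey2 : (mpow M (-p-1) * M).trace = (mpow M (-p)).trace := by
        have : mpow M (-p-1) * M = mpow M (-p) := by
          rw [mpow_eq_fapp hM.1, mpow_eq_fapp hM.1, fapp_mul_base hM.1]
          refine fapp_congr hM.1 fun i => ?_
          have hpos := hM.eigenvalues_pos i
          rw [show (hM.1.eigenvalues i) ^ (-p-1:ℝ) * hM.1.eigenvalues i =
              (hM.1.eigenvalues i) ^ (-p-1:ℝ) * (hM.1.eigenvalues i) ^ (1:ℝ) by
            rw [Real.rpow_one]]
          rw [← Real.rpow_add hpos]
          norm_num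
        rw [this]
      have hg'0 : g' 0 = -p * ((mpow M (-p-1) * N).trace - (mpow M (-p)).trace) := by
        simp only [hg']
        rw [hA0, hCm, Matrix.mul_sub, Matrix.trace_sub, hkey2]
      have hPhiM : Phip p M = ((1/(m:ℝ)) * g 0) ^ (-1/p : ℝ) := by
        rw [Phip, if_pos hM, hg0]
      set T0 : ℝ := g 0 with hT0
      set tN : ℝ := (mpow M (-p-1) * N).trace with htN
      have hsplit : ((1/(m:ℝ)) * T0) ^ ((-1/p : ℝ) - 1) =
          ((1/(m:ℝ)) * T0) ^ (-1/p : ℝ) / ((1/(m:ℝ)) * T0) := by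
        rw [Real.rpow_sub hx0, Real.rpow_one]
      rw [hD, hPhiM, hg'0, hsplit, hg0]
      have hT0ne : (mpow M (-p)).trace ≠ 0 := by rw [← hg0]; exact ne_of_gt hg0pos
      have hmne : (m:ℝ) ≠ 0 := by positivity
      have hpne' : p ≠ 0 := ne_of_gt hp
      field_simp
    rw [← hDeq]
    exact hfinal
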